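/- arXiv:1812.08486 — 3 statements merged into one kernel-verified Lean document; each statement's English description precedes it below -/
import Mathlib

section
/- The resolvent of the second kind of any kernel k ∈ L²_loc(ℝ₊), if it exists, is unique: if r₁ and r₂ both satisfy k − rᵢ = rᵢ * k (where * denotes convolution ∫₀ᵗ rᵢ(t−s)k(s)ds), then r₁ = r₂ almost everywhere. -/
open MeasureTheory Real Set Filter

private lemma sq_int_comp_aux {f : ℝ → ℝ} {t : ℝ} (ht : 0 < t)
    (h : IntegrableOn (fun u => f u ^ 2) (Ioc 0 t)) :
    IntegrableOn (fun s => f (t - s) ^ 2) (Ioc 0 t) := by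
  have h1 : IntervalIntegrable (fun u => f u ^ 2) volume 0 t :=
    (intervalIntegrable_iff_integrableOn_Ioc_of_le ht.le).2 h
  have h2 := (h1.comp_sub_left t).symm
  simp only [sub_zero, sub_self] at h2
  exact (intervalIntegrable_iff_integrableOn_Ioc_of_le ht.le).1 h2

private lemma mul_int_aux {f g : ℝ → ℝ} {s : Set ℝ}
    (hf : AEStronglyMeasurable f (volume.restrict s))
    (hg : AEStronglyMeasurable g (volume.restrict s))
    (hf2 : IntegrableOn (fun x => f x ^ 2) s)
    (hg2 : IntegrableOn (fun x => g x ^ 2) s) :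
    IntegrableOn (fun x => f x * g x) s := by
  have h1 : MemLp f 2 (volume.restrict s) := (memLp_two_iff_integrable_sq hf).2 hf2
  have h2 : MemLp g 2 (volume.restrict s) := (memLp_two_iff_integrable_sq hg).2 hg2
  have h3 : MemLp (f • g) 1 (volume.restrict s) :=
    h2.smul h1 (hpqr := ⟨by norm_num [ENNReal.inv_two_add_inv_two]⟩)
  exact memLp_one_iff_integrable.1 h3

/-- Uniqueness of the resolvent of the second kind: if `r₁` and `r₂` are both in
`L²_loc(ℝ₊)` and both satisfy `k - rᵢ = rᵢ * k` a.e. on `ℝ₊` (Volterra convolution),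
then `r₁ = r₂` a.e. on `ℝ₊`. -/
theorem resolvent_unique (k r₁ r₂ : ℝ → ℝ)
    (hk : ∀ T > (0:ℝ), IntegrableOn (fun t => (k t) ^ 2) (Ioc 0 T))
    (hr₁ : ∀ T > (0:ℝ), IntegrableOn (fun t => (r₁ t) ^ 2) (Ioc 0 T))
    (hr₂ : ∀ T > (0:ℝ), IntegrableOn (fun t => (r₂ t) ^ 2) (Ioc 0 T))
    (hmk : Measurable k) (hm₁ : Measurable r₁) (hm₂ : Measurable r₂)
    (heq₁ : ∀ᵐ t ∂(volume.restrict (Ici (0:ℝ))),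
      k t - r₁ t = ∫ s in (0:ℝ)..t, r₁ (t - s) * k s)
    (heq₂ : ∀ᵐ t ∂(volume.restrict (Ici (0:ℝ))),
      k t - r₂ t = ∫ s in (0:ℝ)..t, r₂ (t - s) * k s) :
    ∀ᵐ t ∂(volume.restrict (Ici (0:ℝ))), r₁ t = r₂ t := by
  set d : ℝ → ℝ := fun t => r₁ t - r₂ t with hd
  have hmd : Measurable d := hm₁.sub hm₂
  have hdsq : ∀ T > (0:ℝ), IntegrableOn (fun t => d t ^ 2) (Ioc 0 T) := by
    intro T hT
    have h1 : MemLp r₁ 2 (volume.restrict (Ioc 0 T)) :=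
      (memLp_two_iff_integrable_sq hm₁.aestronglyMeasurable).2 (hr₁ T hT)
    have h2 : MemLp r₂ 2 (volume.restrict (Ioc 0 T)) :=
      (memLp_two_iff_integrable_sq hm₂.aestronglyMeasurable).2 (hr₂ T hT)
    exact (memLp_two_iff_integrable_sq hmd.aestronglyMeasurable).1 (h1.sub h2)
  -- the cumulative square integral of d
  set F : ℝ → ℝ := fun t => ∫ s in Ioc (0:ℝ) t, d s ^ 2 with hF
  have hF_nonneg : ∀ t, 0 ≤ F t := fun t =>
    setIntegral_nonneg measurableSet_Ioc fun s _ => sq_nonneg _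
  have hF_mono : Monotone F := by
    intro a b hab
    rcases le_or_gt b 0 with hb | hb
    · have ha' : Ioc (0:ℝ) a = ∅ := Ioc_eq_empty (by intro h; linarith)
      have hb' : Ioc (0:ℝ) b = ∅ := Ioc_eq_empty (by intro h; linarith)
      simp [hF, ha', hb']
    · exact setIntegral_mono_set (hdsq b hb)
        (Eventually.of_forall fun s => sq_nonneg _)
        ((Ioc_subset_Ioc_right hab).eventuallyLE)
  have hF_meas : Measurable F := hF_mono.measurable
  -- main step: on each (0, T] we have r₁ = r₂ a.e.
  have key : ∀ T > (0:ℝ), ∀ᵐ t ∂(volume.restrict (Ioc (0:ℝ) T)), r₁ t = r₂ t := by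
    intro T hT
    set C : ℝ := ∫ s in Ioc (0:ℝ) T, k s ^ 2 with hC
    have hC_nonneg : 0 ≤ C := setIntegral_nonneg measurableSet_Ioc fun s _ => sq_nonneg _
    -- a.e. identity for d
    have hae : ∀ᵐ t ∂(volume.restrict (Ici (0:ℝ))),
        d t = -∫ s in (0:ℝ)..t, d (t - s) * k s := by
      filter_upwards [heq₁, heq₂, ae_restrict_mem measurableSet_Ici] with t h1 h2 ht
      rcases eq_or_lt_of_le (mem_Ici.mp ht) with h0 | htpos
      · simp only [← h0, intervalIntegral.integral_same] at h1 h2 ⊢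
        simp [hd]; linarith
      · have hmes : ∀ (f : ℝ → ℝ), Measurable f →
            AEStronglyMeasurable (fun s => f (t - s)) (volume.restrict (Ioc 0 t)) := by
          intro f hf
          exact ((hf.comp (measurable_const.sub measurable_id)).aestronglyMeasurable)
        have ik1 : IntervalIntegrable (fun s => r₁ (t - s) * k s) volume 0 t := by
          refine (intervalIntegrable_iff_integrableOn_Ioc_of_le htpos.le).2 ?_
          exact mul_int_aux (hmes r₁ hm₁) hmk.aestronglyMeasurable
            (sq_int_comp_aux htpos (hr₁ t htpos)) (hk t htpos)
        have ik2 : IntervalIntegrable (fun s => r₂ (t - s) * k s) volume 0 t := by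
          refine (intervalIntegrable_iff_integrableOn_Ioc_of_le htpos.le).2 ?_
          exact mul_int_aux (hmes r₂ hm₂) hmk.aestronglyMeasurable
            (sq_int_comp_aux htpos (hr₂ t htpos)) (hk t htpos)
        have hdiff : r₂ t - r₁ t = ∫ s in (0:ℝ)..t, d (t - s) * k s := by
          have : r₂ t - r₁ t = (k t - r₁ t) - (k t - r₂ t) := by ring
          rw [this, h1, h2, ← intervalIntegral.integral_sub ik1 ik2]
          apply intervalIntegral.integral_congr
          intro s _
          simp only [hd]; ring
        simp only [hd]; linarith
    -- a.e. quadratic bound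
    have hsq : ∀ᵐ t ∂(volume.restrict (Ioc (0:ℝ) T)), d t ^ 2 ≤ C * F t := by
      have hsub : Ioc (0:ℝ) T ⊆ Ici (0:ℝ) := fun x hx => hx.1.le
      filter_upwards [ae_restrict_of_ae_restrict_of_subset hsub hae,
        ae_restrict_mem measurableSet_Ioc] with t hdt ht
      obtain ⟨ht0, htT⟩ := ht
      have hb : |d t| ≤ ∫ s in (0:ℝ)..t, |d (t - s)| * |k s| := by
        rw [hdt, abs_neg]
        calc |∫ s in (0:ℝ)..t, d (t - s) * k s|
            ≤ ∫ s in (0:ℝ)..t, |d (t - s) * k s| :=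
              intervalIntegral.abs_integral_le_integral_abs ht0.le
          _ = ∫ s in (0:ℝ)..t, |d (t - s)| * |k s| := by
              simp only [abs_mul]
      set A : ℝ := ∫ s in Ioc (0:ℝ) t, d (t - s) ^ 2 with hA
      set B : ℝ := ∫ s in Ioc (0:ℝ) t, k s ^ 2 with hB
      have hA_nonneg : 0 ≤ A := setIntegral_nonneg measurableSet_Ioc fun s _ => sq_nonneg _
      have hB_nonneg : 0 ≤ B := setIntegral_nonneg measurableSet_Ioc fun s _ => sq_nonneg _
      have hmemd : MemLp (fun s => |d (t - s)|) 2 (volume.restrict (Ioc (0:ℝ) t)) := by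
        have : MemLp (fun s => d (t - s)) 2 (volume.restrict (Ioc (0:ℝ) t)) :=
          (memLp_two_iff_integrable_sq
            ((hmd.comp (measurable_const.sub measurable_id)).aestronglyMeasurable)).2
            (sq_int_comp_aux ht0 (hdsq t ht0))
        simpa [Real.norm_eq_abs] using this.norm
      have hmemk : MemLp (fun s => |k s|) 2 (volume.restrict (Ioc (0:ℝ) t)) := by
        have : MemLp k 2 (volume.restrict (Ioc (0:ℝ) t)) :=
          (memLp_two_iff_integrable_sq hmk.aestronglyMeasurable).2 (hk t ht0)
        simpa [Real.norm_eq_abs] using this.norm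
      have hCS : ∫ s in (0:ℝ)..t, |d (t - s)| * |k s| ≤ A ^ (1/2 : ℝ) * B ^ (1/2 : ℝ) := by
        rw [intervalIntegral.integral_of_le ht0.le]
        have h22 : (2:ℝ).HolderConjugate 2 := Real.HolderConjugate.two_two
        have := integral_mul_le_Lp_mul_Lq_of_nonneg h22
          (Eventually.of_forall fun s => abs_nonneg (d (t - s)))
          (Eventually.of_forall fun s => abs_nonneg (k s))
          (by simpa using hmemd) (by simpa using hmemk)
        have e1 : ∀ x : ℝ, |x| ^ (2:ℝ) = x ^ 2 := by
          intro x
          rw [show ((2:ℝ) = ((2:ℕ):ℝ)) by norm_num, Real.rpow_natCast, sq_abs]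
        simp only [e1] at this
        exact this
      have hchain : |d t| ≤ A ^ (1/2 : ℝ) * B ^ (1/2 : ℝ) := hb.trans hCS
      have hsqle : d t ^ 2 ≤ A * B := by
        have h1 : d t ^ 2 = |d t| ^ 2 := (sq_abs _).symm
        have h2 : |d t| ^ 2 ≤ (A ^ (1/2 : ℝ) * B ^ (1/2 : ℝ)) ^ 2 :=
          pow_le_pow_left₀ (abs_nonneg _) hchain 2
        have h3 : (A ^ (1/2 : ℝ) * B ^ (1/2 : ℝ)) ^ 2 = A * B := by
          rw [mul_pow, ← Real.rpow_natCast (A ^ (1/2:ℝ)) 2, ← Real.rpow_natCast (B ^ (1/2:ℝ)) 2,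
            ← Real.rpow_mul hA_nonneg, ← Real.rpow_mul hB_nonneg]
          norm_num
        rw [h1]; rw [h3] at h2; exact h2
      have hAF : A = F t := by
        rw [hA, ← intervalIntegral.integral_of_le ht0.le,
          intervalIntegral.integral_comp_sub_left (fun u => d u ^ 2) t]
        simp only [sub_self, sub_zero]
        rw [intervalIntegral.integral_of_le ht0.le]
      have hBC : B ≤ C := setIntegral_mono_set (hk T hT)
        (Eventually.of_forall fun s => sq_nonneg _)
        ((Ioc_subset_Ioc_right htT).eventuallyLE)
      calc d t ^ 2 ≤ A * B := hsqle
        _ ≤ A * C := mul_le_mul_of_nonneg_left hBC hA_nonneg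
        _ = C * F t := by rw [hAF, mul_comm]
    -- integrability of F
    have hF_int : IntegrableOn F (Ioc (0:ℝ) T) := by
      refine Integrable.mono' (g := fun _ => F T)
        (integrableOn_const measure_Ioc_lt_top.ne)
        hF_meas.aestronglyMeasurable ?_
      filter_upwards [ae_restrict_mem measurableSet_Ioc] with s hs
      rw [Real.norm_eq_abs, abs_of_nonneg (hF_nonneg s)]
      exact hF_mono hs.2
    -- Gronwall-type inequality
    have hgron : ∀ t, 0 ≤ t → t ≤ T → F t ≤ ∫ s in Ioc (0:ℝ) t, C * F s := by
      intro t ht0 htT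
      rcases eq_or_lt_of_le ht0 with h0 | htpos
      · have : Ioc (0:ℝ) t = ∅ := by rw [← h0]; exact Ioc_self 0
        simp [hF, this]
      · have h1 : IntegrableOn (fun s => d s ^ 2) (Ioc (0:ℝ) t) := hdsq t htpos
        have h2 : IntegrableOn (fun s => C * F s) (Ioc (0:ℝ) t) :=
          (hF_int.mono_set (Ioc_subset_Ioc_right htT)).const_mul C
        refine setIntegral_mono_ae_restrict h1 h2 ?_
        exact ae_restrict_of_ae_restrict_of_subset (Ioc_subset_Ioc_right htT) hsq
    -- iterate
    have hind : ∀ n : ℕ, ∀ t, 0 ≤ t → t ≤ T →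
        F t ≤ F T * (C * t) ^ n / n.factorial := by
      intro n
      induction n with
      | zero => intro t h0 htT; simpa using hF_mono htT
      | succ n ih =>
        intro t h0 htT
        have hfac : ((n.factorial : ℝ)) ≠ 0 := Nat.cast_ne_zero.2 n.factorial_ne_zero
        have hnp1 : ((n:ℝ) + 1) ≠ 0 := by positivity
        calc F t ≤ ∫ s in Ioc (0:ℝ) t, C * F s := hgron t h0 htT
          _ ≤ ∫ s in Ioc (0:ℝ) t, C * (F T * (C * s) ^ n / n.factorial) := by
              refine setIntegral_mono_on
                ((hF_int.mono_set (Ioc_subset_Ioc_right htT)).const_mul C)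
                ?_ measurableSet_Ioc ?_
              · apply Continuous.integrableOn_Ioc
                fun_prop
              · intro s hs
                exact mul_le_mul_of_nonneg_left (ih s hs.1.le (hs.2.trans htT)) hC_nonneg
          _ = F T * (C * t) ^ (n + 1) / (n + 1).factorial := by
              rw [← intervalIntegral.integral_of_le h0]
              have e : ∀ s : ℝ, C * (F T * (C * s) ^ n / n.factorial)
                  = (C ^ (n+1) * F T / n.factorial) * s ^ n := by
                intro s; rw [mul_pow]; ring
              simp_rw [e]
              rw [intervalIntegral.integral_const_mul, integral_pow]
              rw [Nat.factorial_succ, mul_pow]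
              push_cast
              field_simp
              ring
    have hFT : F T = 0 := by
      have htend : Tendsto (fun n : ℕ => F T * (C * T) ^ n / n.factorial) atTop (nhds 0) := by
        have h := FloorSemiring.tendsto_pow_div_factorial_atTop (K := ℝ) (C * T)
        have := h.const_mul (F T)
        simpa [mul_div_assoc] using this
      have hle : F T ≤ 0 :=
        ge_of_tendsto' htend fun n => hind n T hT.le le_rfl
      exact le_antisymm hle (hF_nonneg T)
    have hzero : (fun s => d s ^ 2) =ᵐ[volume.restrict (Ioc (0:ℝ) T)] 0 :=
      (setIntegral_eq_zero_iff_of_nonneg_ae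
        (Eventually.of_forall fun s => sq_nonneg _) (hdsq T hT)).1 hFT
    filter_upwards [hzero] with t htz
    have : d t = 0 := by
      have := htz
      simp only [Pi.zero_apply] at this
      exact pow_eq_zero_iff (two_ne_zero) |>.1 this
    simpa [hd, sub_eq_zero] using this
  -- assemble over all T
  rw [← Measure.restrict_congr_set (Ioi_ae_eq_Ici (a := (0:ℝ)) (μ := volume)),
    ae_restrict_iff' measurableSet_Ioi]
  have hall : ∀ᵐ t ∂(volume : Measure ℝ), ∀ n : ℕ, t ∈ Ioc (0:ℝ) (n + 1) → r₁ t = r₂ t := by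
    rw [ae_all_iff]
    intro n
    have h := key (n + 1) (by positivity)
    rwa [ae_restrict_iff' measurableSet_Ioc] at h
  filter_upwards [hall] with t ht htpos
  obtain ⟨n, hn⟩ := exists_nat_ge t
  exact ht n ⟨htpos, hn.trans (by linarith)⟩
end

section
/- Fix T > 0, a measurable h : ℝ₊ → ℝ, K ∈ L²_loc(ℝ₊), and continuous R_Ψ : ℝ → ℝ. Suppose Ψ : [0,T] × ℝ₊ → ℝ satisfies the mild Riccati equation Ψ(t,x) = h(x−t)·𝟏_{x≥t} + R_Ψ(∫₀^∞ Ψ(t−x,y)K(y)dy)·𝟏_{x<t}, and define ψ(t) = ∫₀^∞ Ψ(t,x) K(x) dx (assumed finite for all t ∈ [0,T]). Then ψ satisfies the Volterra equation ψ(t) = ∫₀^∞ h(x) K(t+x) dx + ∫₀ᵗ K(t−s) R_Ψ(ψ(s)) ds for all t ∈ [0,T]. -/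
open MeasureTheory Real Set

/-- From the mild SPDE-form Riccati equation
`Ψ(t,x) = h(x-t)𝟏_{x≥t} + R_Ψ(∫₀^∞ Ψ(t-x,y)K(y)dy)𝟏_{x<t}` to the Volterra equation
`ψ(t) = ∫₀^∞ h(x)K(t+x)dx + ∫₀ᵗ K(t-s)R_Ψ(ψ(s))ds`, where
`ψ(t) = ∫₀^∞ Ψ(t,x)K(x)dx`. -/
theorem spde_riccati_to_volterra
    (T : ℝ) (hT : 0 < T) (h K : ℝ → ℝ) (RΨ : ℝ → ℝ) (hRΨ : Continuous RΨ)
    (hmeas : Measurable h)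
    (hL2K : ∀ S > (0:ℝ), IntegrableOn (fun t => (K t) ^ 2) (Ioc 0 S))
    (Ψ : ℝ → ℝ → ℝ) (ψ : ℝ → ℝ)
    (hψ : ∀ t ∈ Icc (0:ℝ) T, ψ t = ∫ x in Ioi (0:ℝ), Ψ t x * K x)
    (hmild : ∀ t ∈ Icc (0:ℝ) T, ∀ x : ℝ, 0 ≤ x →
      Ψ t x = if t ≤ x then h (x - t)
              else RΨ (∫ y in Ioi (0:ℝ), Ψ (t - x) y * K y))
    (hInt₁ : ∀ t ∈ Icc (0:ℝ) T, IntegrableOn (fun x => Ψ t x * K x) (Ioi (0:ℝ)))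
    (hInt₂ : ∀ t ∈ Icc (0:ℝ) T, IntegrableOn (fun x => h x * K (t + x)) (Ioi (0:ℝ)))
    (hInt₃ : ∀ t ∈ Icc (0:ℝ) T,
      IntervalIntegrable (fun s => K (t - s) * RΨ (ψ s)) volume 0 t) :
    ∀ t ∈ Icc (0:ℝ) T,
      ψ t = (∫ x in Ioi (0:ℝ), h x * K (t + x))
              + ∫ s in (0:ℝ)..t, K (t - s) * RΨ (ψ s) := by

  intro t ht
  obtain ⟨ht0, htT⟩ := ht
  set g : ℝ → ℝ := fun x => (if t ≤ x then h (x - t) else RΨ (ψ (t - x))) * K x with hgdef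
  have hgeq : EqOn (fun x => Ψ t x * K x) g (Ioi (0:ℝ)) := by
    intro x hx
    have hx0 : (0:ℝ) < x := hx
    simp only [hgdef]
    rw [hmild t ⟨ht0, htT⟩ x hx0.le]
    by_cases hc : t ≤ x
    · simp [hc]
    · push_neg at hc
      have htx : t - x ∈ Icc (0:ℝ) T := ⟨by linarith, by linarith⟩
      rw [if_neg (not_le.mpr hc), if_neg (not_le.mpr hc), ← hψ _ htx]
  have hIg : IntegrableOn g (Ioi (0:ℝ)) :=
    (hInt₁ t ⟨ht0, htT⟩).congr_fun hgeq measurableSet_Ioi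
  have hsplit : Ioc (0:ℝ) t ∪ Ioi t = Ioi (0:ℝ) := Ioc_union_Ioi_eq_Ioi ht0
  have hψt : ψ t = (∫ x in Ioc (0:ℝ) t, g x) + ∫ x in Ioi t, g x := by
    rw [hψ t ⟨ht0, htT⟩, setIntegral_congr_fun measurableSet_Ioi hgeq, ← hsplit,
      setIntegral_union (Ioc_disjoint_Ioi le_rfl) measurableSet_Ioi
        (hIg.mono_set (by rw [← hsplit]; exact subset_union_left))
        (hIg.mono_set (by rw [← hsplit]; exact subset_union_right))]
  -- second piece: translation
  have hpiece2 : (∫ x in Ioi t, g x) = ∫ x in Ioi (0:ℝ), h x * K (t + x) := by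
    have h1 : (∫ x in Ioi t, g x) = ∫ x in Ioi t, h (x - t) * K x := by
      refine setIntegral_congr_fun measurableSet_Ioi fun x hx => ?_
      have : t ≤ x := le_of_lt hx
      simp [hgdef, this]
    set G : ℝ → ℝ := (Ioi (0:ℝ)).indicator (fun u => h u * K (t + u)) with hGdef
    have h2 : (∫ x in Ioi t, h (x - t) * K x) = ∫ x, G (x - t) := by
      rw [← integral_indicator measurableSet_Ioi]
      congr 1
      funext x
      by_cases hx : t < x
      · have hx' : (0:ℝ) < x - t := by linarith
        simp [hGdef, indicator_of_mem (mem_Ioi.mpr hx), indicator_of_mem (mem_Ioi.mpr hx'),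
          add_sub_cancel]
      · have hx' : ¬ (0:ℝ) < x - t := by intro hh; exact hx (by linarith)
        rw [hGdef, indicator_of_notMem (by simpa using hx),
          indicator_of_notMem (by simpa using hx')]
    rw [h1, h2, integral_sub_right_eq_self G t, hGdef, integral_indicator measurableSet_Ioi]
  -- first piece: interval integral
  have hpiece1 : (∫ x in Ioc (0:ℝ) t, g x) = ∫ s in (0:ℝ)..t, K (t - s) * RΨ (ψ s) := by
    rw [integral_Ioc_eq_integral_Ioo]
    have h1 : (∫ x in Ioo (0:ℝ) t, g x)
        = ∫ x in Ioo (0:ℝ) t, (fun s => K (t - s) * RΨ (ψ s)) (t - x) := by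
      refine setIntegral_congr_fun measurableSet_Ioo fun x hx => ?_
      obtain ⟨hx1, hx2⟩ := hx
      simp only [hgdef, if_neg (not_le.mpr hx2)]
      have : t - (t - x) = x := by ring
      rw [this]
      ring
    rw [h1, ← integral_Ioc_eq_integral_Ioo, ← intervalIntegral.integral_of_le ht0,
      intervalIntegral.integral_comp_sub_left (fun s => K (t - s) * RΨ (ψ s)) t]
    simp
  rw [hψt, hpiece1, hpiece2, add_comm]
end

section
/- Let K ∈ L²(0,T) with ∫₀ᵀ K(t)² dt =: κ² < ∞, let Q : ℂ → ℂ satisfy a local Lipschitz bound |Q(z₁) − Q(z₂)| ≤ C(1 + |z₁| + |z₂|)|z₁ − z₂|, and fix v ∈ ℂ. Then any two continuous solutions ψ₁, ψ₂ : [0,T₀] → ℂ of the Riccati–Volterra equation ψ = vK + K*(Q∘ψ) on a common interval [0,T₀] ⊆ [0,T] with K continuous on (0,T] coincide: ψ₁ = ψ₂ on [0,T₀]. -/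
open MeasureTheory Real Set

/-- Uniqueness for the Riccati–Volterra equation `ψ = vK + K*(Q∘ψ)` with an `L²`
kernel `K` continuous on `(0,T]` and a locally Lipschitz `Q` with quadratic growth:
any two continuous solutions on a common interval `[0,T₀] ⊆ [0,T]` coincide. -/
theorem riccati_volterra_uniqueness
    (T : ℝ) (hT : 0 < T) (K : ℝ → ℝ)
    (hKL2 : IntegrableOn (fun t => (K t) ^ 2) (Ioc 0 T))
    (hKcont : ContinuousOn K (Ioc 0 T))
    (Q : ℂ → ℂ) (C : ℝ) (hC : 0 ≤ C)
    (hQ : ∀ z₁ z₂ : ℂ, ‖Q z₁ - Q z₂‖ ≤ C * (1 + ‖z₁‖ + ‖z₂‖) * ‖z₁ - z₂‖)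
    (v : ℂ) (T₀ : ℝ) (hT₀ : T₀ ∈ Icc (0:ℝ) T)
    (ψ₁ ψ₂ : ℝ → ℂ)
    (hψ₁cont : ContinuousOn ψ₁ (Icc 0 T₀)) (hψ₂cont : ContinuousOn ψ₂ (Icc 0 T₀))
    (hInt₁ : ∀ t ∈ Icc (0:ℝ) T₀,
      IntervalIntegrable (fun s => (K (t - s) : ℂ) * Q (ψ₁ s)) volume 0 t)
    (hInt₂ : ∀ t ∈ Icc (0:ℝ) T₀,
      IntervalIntegrable (fun s => (K (t - s) : ℂ) * Q (ψ₂ s)) volume 0 t)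
    (heq₁ : ∀ t ∈ Icc (0:ℝ) T₀,
      ψ₁ t = v * (K t : ℂ) + ∫ s in (0:ℝ)..t, (K (t - s) : ℂ) * Q (ψ₁ s))
    (heq₂ : ∀ t ∈ Icc (0:ℝ) T₀,
      ψ₂ t = v * (K t : ℂ) + ∫ s in (0:ℝ)..t, (K (t - s) : ℂ) * Q (ψ₂ s)) :
    ∀ t ∈ Icc (0:ℝ) T₀, ψ₁ t = ψ₂ t := by
  obtain ⟨hT₀0, hT₀T⟩ := hT₀
  -- a uniform bound on the solutions
  obtain ⟨M₁, hM₁⟩ := (isCompact_Icc : IsCompact (Icc (0:ℝ) T₀)).exists_bound_of_continuousOn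
    hψ₁cont
  obtain ⟨M₂, hM₂⟩ := (isCompact_Icc : IsCompact (Icc (0:ℝ) T₀)).exists_bound_of_continuousOn
    hψ₂cont
  set M : ℝ := max (max M₁ M₂) 0 with hMdef
  have hM0 : 0 ≤ M := le_max_right _ _
  have hMb₁ : ∀ s ∈ Icc (0:ℝ) T₀, ‖ψ₁ s‖ ≤ M := fun s hs =>
    (hM₁ s hs).trans ((le_max_left _ _).trans (le_max_left _ _))
  have hMb₂ : ∀ s ∈ Icc (0:ℝ) T₀, ‖ψ₂ s‖ ≤ M := fun s hs =>
    (hM₂ s hs).trans ((le_max_right _ _).trans (le_max_left _ _))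
  set L : ℝ := C * (1 + 2 * M) with hLdef
  have hL0 : 0 ≤ L := mul_nonneg hC (by linarith)
  -- Lipschitz bound on the interval
  have hLip : ∀ s ∈ Icc (0:ℝ) T₀, ‖Q (ψ₁ s) - Q (ψ₂ s)‖ ≤ L * ‖ψ₁ s - ψ₂ s‖ := by
    intro s hs
    refine (hQ (ψ₁ s) (ψ₂ s)).trans ?_
    have h1 := hMb₁ s hs
    have h2 := hMb₂ s hs
    have hn : (0:ℝ) ≤ ‖ψ₁ s - ψ₂ s‖ := norm_nonneg _
    have : C * (1 + ‖ψ₁ s‖ + ‖ψ₂ s‖) ≤ L := by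
      rw [hLdef]
      apply mul_le_mul_of_nonneg_left _ hC
      linarith
    exact mul_le_mul_of_nonneg_right this hn
  -- |K| is integrable on (0,T]
  have hKmeas : AEStronglyMeasurable K (volume.restrict (Ioc (0:ℝ) T)) :=
    hKcont.aestronglyMeasurable measurableSet_Ioc
  have hKabs : IntegrableOn (fun t => |K t|) (Ioc 0 T) := by
    have hgint : IntegrableOn (fun t => (1 + K t ^ 2) / 2) (Ioc 0 T) := by
      apply Integrable.div_const
      exact (integrable_const (1:ℝ)).add hKL2
    refine Integrable.mono hgint hKmeas.norm ?_
    filter_upwards with t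
    have h1 : (0:ℝ) ≤ 1 + K t ^ 2 := by positivity
    have h2 : |K t| ≤ (1 + K t ^ 2) / 2 := by nlinarith [sq_nonneg (|K t| - 1), sq_abs (K t)]
    simp only [Real.norm_eq_abs, abs_abs, abs_div, abs_of_nonneg h1]
    calc |K t| ≤ (1 + K t ^ 2) / 2 := h2
      _ ≤ (1 + K t ^ 2) / |2| := by norm_num
  have hKint : ∀ r, 0 ≤ r → r ≤ T → IntervalIntegrable (fun u => |K u|) volume 0 r := by
    intro r hr hrT
    rw [intervalIntegrable_iff_integrableOn_Ioc_of_le hr]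
    exact hKabs.mono_set (Ioc_subset_Ioc_right hrT)
  -- choose a small step h with L * ∫₀^h |K| ≤ 1/2
  obtain ⟨h, hh0, hhT, hsmall⟩ :
      ∃ h : ℝ, 0 < h ∧ h ≤ T ∧ L * ∫ u in (0:ℝ)..h, |K u| ≤ 1 / 2 := by
    have hF : ContinuousOn (fun x => ∫ u in Ioc (0:ℝ) x, |K u|) (Icc 0 T) := by
      apply intervalIntegral.continuousOn_primitive
      rwa [integrableOn_Icc_iff_integrableOn_Ioc]
    have hF0 : ContinuousWithinAt (fun x => ∫ u in Ioc (0:ℝ) x, |K u|) (Icc 0 T) 0 :=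
      hF 0 (left_mem_Icc.mpr hT.le)
    have hval : (∫ u in Ioc (0:ℝ) (0:ℝ), |K u|) = 0 := by simp
    have heps : (0:ℝ) < 1 / (2 * (L + 1)) := by positivity
    rw [Metric.continuousWithinAt_iff] at hF0
    obtain ⟨δ, hδ0, hδ⟩ := hF0 _ heps
    refine ⟨min (δ / 2) T, lt_min (by linarith) hT, min_le_right _ _, ?_⟩
    set h := min (δ / 2) T with hhdef
    have hh0 : 0 < h := lt_min (by linarith) hT
    have hmem : h ∈ Icc (0:ℝ) T := ⟨hh0.le, min_le_right _ _⟩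
    have hclose : dist h 0 < δ := by
      rw [Real.dist_eq, sub_zero, abs_of_pos hh0]
      exact lt_of_le_of_lt (min_le_left _ _) (by linarith)
    have hd := hδ hmem hclose
    rw [hval, Real.dist_eq, sub_zero] at hd
    have hFnn : (0:ℝ) ≤ ∫ u in Ioc (0:ℝ) h, |K u| :=
      setIntegral_nonneg measurableSet_Ioc (fun x _ => abs_nonneg _)
    have hFh' : (∫ u in Ioc (0:ℝ) h, |K u|) < 1 / (2 * (L + 1)) := by
      rwa [abs_of_nonneg hFnn] at hd
    have heq : (∫ u in (0:ℝ)..h, |K u|) = ∫ u in Ioc (0:ℝ) h, |K u| :=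
      intervalIntegral.integral_of_le hh0.le
    rw [heq]
    have : L * (∫ u in Ioc (0:ℝ) h, |K u|) ≤ (L + 1) * (1 / (2 * (L + 1))) := by
      apply mul_le_mul (by linarith) hFh'.le hFnn (by linarith)
    calc L * (∫ u in Ioc (0:ℝ) h, |K u|) ≤ (L + 1) * (1 / (2 * (L + 1))) := this
      _ = 1 / 2 := by field_simp
  -- the key extension step
  have key : ∀ a b : ℝ, 0 ≤ a → a ≤ b → b ≤ T₀ → b - a ≤ h →
      (∀ s ∈ Icc (0:ℝ) a, ψ₁ s = ψ₂ s) → ∀ s ∈ Icc (0:ℝ) b, ψ₁ s = ψ₂ s := by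
    intro a b ha hab hbT₀ hbah hzero
    have hIccsub : Icc a b ⊆ Icc (0:ℝ) T₀ := Icc_subset_Icc ha hbT₀
    have hcont : ContinuousOn (fun s => ‖ψ₁ s - ψ₂ s‖) (Icc a b) :=
      ((hψ₁cont.sub hψ₂cont).norm).mono hIccsub
    obtain ⟨t₀, ht₀mem, ht₀max⟩ :=
      (isCompact_Icc : IsCompact (Icc a b)).exists_isMaxOn
        (nonempty_Icc.mpr hab) hcont
    set M₀ : ℝ := ‖ψ₁ t₀ - ψ₂ t₀‖ with hM₀def
    have hM₀nn : 0 ≤ M₀ := norm_nonneg _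
    have hbound : ∀ t ∈ Icc a b, ‖ψ₁ t - ψ₂ t‖ ≤ M₀ / 2 := by
      intro t ht
      have htT₀ : t ∈ Icc (0:ℝ) T₀ := hIccsub ht
      have hat : a ≤ t := ht.1
      have h0t : (0:ℝ) ≤ t := ha.trans hat
      have htT : t ≤ T := htT₀.2.trans hT₀T
      -- the difference as a single integral
      have hIfull : IntervalIntegrable
          (fun s => (K (t - s) : ℂ) * (Q (ψ₁ s) - Q (ψ₂ s))) volume 0 t := by
        have := (hInt₁ t htT₀).sub (hInt₂ t htT₀)
        simpa [mul_sub] using this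
      have hdiff : ψ₁ t - ψ₂ t
          = ∫ s in (0:ℝ)..t, (K (t - s) : ℂ) * (Q (ψ₁ s) - Q (ψ₂ s)) := by
        rw [heq₁ t htT₀, heq₂ t htT₀]
        rw [show (fun s => (K (t - s) : ℂ) * (Q (ψ₁ s) - Q (ψ₂ s)))
            = fun s => (K (t - s) : ℂ) * Q (ψ₁ s) - (K (t - s) : ℂ) * Q (ψ₂ s) by
          funext s; ring]
        rw [intervalIntegral.integral_sub (hInt₁ t htT₀) (hInt₂ t htT₀)]
        ring
      -- split off [0,a], where the integrand vanishes
      have hsub0a : IntervalIntegrable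
          (fun s => (K (t - s) : ℂ) * (Q (ψ₁ s) - Q (ψ₂ s))) volume 0 a :=
        hIfull.mono_set (by
          rw [uIcc_of_le ha, uIcc_of_le h0t]
          exact Icc_subset_Icc_right hat)
      have hsubat : IntervalIntegrable
          (fun s => (K (t - s) : ℂ) * (Q (ψ₁ s) - Q (ψ₂ s))) volume a t :=
        hIfull.mono_set (by
          rw [uIcc_of_le hat, uIcc_of_le h0t]
          exact Icc_subset_Icc_left ha)
      have hzero0a : (∫ s in (0:ℝ)..a, (K (t - s) : ℂ) * (Q (ψ₁ s) - Q (ψ₂ s))) = 0 := by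
        rw [intervalIntegral.integral_congr (g := fun _ => (0:ℂ)) ?_,
          intervalIntegral.integral_zero]
        intro s hs
        rw [uIcc_of_le ha] at hs
        show (K (t - s) : ℂ) * (Q (ψ₁ s) - Q (ψ₂ s)) = 0
        rw [hzero s hs]
        simp
      have hsplit : (∫ s in (0:ℝ)..t, (K (t - s) : ℂ) * (Q (ψ₁ s) - Q (ψ₂ s)))
          = ∫ s in a..t, (K (t - s) : ℂ) * (Q (ψ₁ s) - Q (ψ₂ s)) := by
        rw [← intervalIntegral.integral_add_adjacent_intervals hsub0a hsubat, hzero0a,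
          zero_add]
      -- integrability of the dominating function
      have hKta : IntervalIntegrable (fun u => |K u|) volume 0 (t - a) :=
        hKint (t - a) (by linarith) (by linarith)
      have hKts : IntervalIntegrable (fun s => |K (t - s)|) volume a t := by
        have := (hKta.comp_sub_left t).symm
        simpa using this
      have hg : IntervalIntegrable (fun s => L * M₀ * |K (t - s)|) volume a t :=
        hKts.const_mul _
      -- pointwise bound
      have hptwise : ∀ s ∈ Icc a t, ‖(K (t - s) : ℂ) * (Q (ψ₁ s) - Q (ψ₂ s))‖
          ≤ L * M₀ * |K (t - s)| := by
        intro s hs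
        have hsab : s ∈ Icc a b := ⟨hs.1, hs.2.trans ht.2⟩
        have hsT₀ : s ∈ Icc (0:ℝ) T₀ := hIccsub hsab
        have hnm : ‖ψ₁ s - ψ₂ s‖ ≤ M₀ := ht₀max hsab
        have h1 : ‖(K (t - s) : ℂ) * (Q (ψ₁ s) - Q (ψ₂ s))‖
            = |K (t - s)| * ‖Q (ψ₁ s) - Q (ψ₂ s)‖ := by
          rw [norm_mul, Complex.norm_real, Real.norm_eq_abs]
        rw [h1]
        have h2 : ‖Q (ψ₁ s) - Q (ψ₂ s)‖ ≤ L * M₀ :=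
          (hLip s hsT₀).trans (mul_le_mul_of_nonneg_left hnm hL0)
        calc |K (t - s)| * ‖Q (ψ₁ s) - Q (ψ₂ s)‖
            ≤ |K (t - s)| * (L * M₀) :=
              mul_le_mul_of_nonneg_left h2 (abs_nonneg _)
          _ = L * M₀ * |K (t - s)| := by ring
      -- norm estimate
      have hnormint : ‖∫ s in a..t, (K (t - s) : ℂ) * (Q (ψ₁ s) - Q (ψ₂ s))‖
          ≤ ∫ s in a..t, L * M₀ * |K (t - s)| := by
        refine (intervalIntegral.norm_integral_le_integral_norm hat).trans ?_
        apply intervalIntegral.integral_mono_on hat hsubat.norm hg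
        exact hptwise
      -- compute / bound the dominating integral
      have hcomp : (∫ s in a..t, |K (t - s)|) = ∫ u in (0:ℝ)..(t - a), |K u| := by
        have := intervalIntegral.integral_comp_sub_left (a := a) (b := t)
          (fun u => |K u|) t
        simpa using this
      have hmono : (∫ u in (0:ℝ)..(t - a), |K u|) ≤ ∫ u in (0:ℝ)..h, |K u| := by
        apply intervalIntegral.integral_mono_interval le_rfl (by linarith)
          (by linarith [ht.2])
        · filter_upwards with x; exact abs_nonneg _
        · exact hKint h (by linarith) hhT
      have hGnn : (0:ℝ) ≤ ∫ u in (0:ℝ)..(t - a), |K u| := by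
        apply intervalIntegral.integral_nonneg (by linarith)
        intro u _; exact abs_nonneg _
      calc ‖ψ₁ t - ψ₂ t‖
          = ‖∫ s in a..t, (K (t - s) : ℂ) * (Q (ψ₁ s) - Q (ψ₂ s))‖ := by
            rw [hdiff, hsplit]
        _ ≤ ∫ s in a..t, L * M₀ * |K (t - s)| := hnormint
        _ = L * M₀ * ∫ s in a..t, |K (t - s)| := by
            rw [intervalIntegral.integral_const_mul]
        _ = L * M₀ * ∫ u in (0:ℝ)..(t - a), |K u| := by rw [hcomp]
        _ ≤ M₀ / 2 := by
            nlinarith [mul_le_mul_of_nonneg_left hmono (mul_nonneg hL0 hM₀nn),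
              mul_le_mul_of_nonneg_left hsmall hM₀nn]
    have hM₀zero : M₀ = 0 := by
      have := hbound t₀ ht₀mem
      linarith
    intro s hs
    rcases le_or_gt s a with h' | h'
    · exact hzero s ⟨hs.1, h'⟩
    · have hsab : s ∈ Icc a b := ⟨h'.le, hs.2⟩
      have h2 : ‖ψ₁ s - ψ₂ s‖ ≤ M₀ := ht₀max hsab
      rw [hM₀zero] at h2
      have : ‖ψ₁ s - ψ₂ s‖ = 0 := le_antisymm h2 (norm_nonneg _)
      exact sub_eq_zero.mp (norm_eq_zero.mp this)
  -- zero at 0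
  have hzero0 : ψ₁ 0 = ψ₂ 0 := by
    have h1 := heq₁ 0 (left_mem_Icc.mpr hT₀0)
    have h2 := heq₂ 0 (left_mem_Icc.mpr hT₀0)
    simp only [intervalIntegral.integral_same, add_zero] at h1 h2
    rw [h1, h2]
  -- induction: ψ₁ = ψ₂ on [0, min (n*h) T₀]
  have main : ∀ n : ℕ, ∀ s ∈ Icc (0:ℝ) (min (n * h) T₀), ψ₁ s = ψ₂ s := by
    intro n
    induction n with
    | zero =>
      intro s hs
      simp only [Nat.cast_zero, zero_mul, min_eq_left hT₀0] at hs
      have : s = 0 := le_antisymm hs.2 hs.1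
      rw [this]; exact hzero0
    | succ n ih =>
      have ha : (0:ℝ) ≤ min ((n:ℝ) * h) T₀ := le_min (by positivity) hT₀0
      have hab : min ((n:ℝ) * h) T₀ ≤ min (((n:ℕ)+1 : ℝ) * h) T₀ := by
        apply min_le_min_right
        nlinarith [hh0.le]
      have hb : min (((n:ℕ)+1 : ℝ) * h) T₀ ≤ T₀ := min_le_right _ _
      have hdiffh : min (((n:ℕ)+1 : ℝ) * h) T₀ - min ((n:ℝ) * h) T₀ ≤ h := by
        rcases le_total ((n:ℝ) * h) T₀ with h1 | h1
        · rcases le_total (((n:ℕ)+1 : ℝ) * h) T₀ with h2 | h2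
          · rw [min_eq_left h1, min_eq_left h2]; ring_nf; nlinarith
          · rw [min_eq_left h1, min_eq_right h2]; nlinarith
        · rw [min_eq_right h1]
          have : min (((n:ℕ)+1 : ℝ) * h) T₀ ≤ T₀ := min_le_right _ _
          linarith [hh0.le, this]
      have := key (min ((n:ℝ) * h) T₀) (min (((n:ℕ)+1 : ℝ) * h) T₀) ha hab hb hdiffh ih
      intro s hs
      apply this s
      convert hs using 3
      push_cast
      ring
  intro t ht
  obtain ⟨n, hn⟩ := exists_nat_ge (T₀ / h)
  have hnT₀ : T₀ ≤ (n:ℝ) * h := by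
    rw [div_le_iff₀ hh0] at hn
    linarith
  have := main n t
  rw [min_eq_right hnT₀] at this
  exact this ht
end
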